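/- Let m : [0,∞) → ℝ satisfy m(v) = ½ e^{−B(v)} ∫_0^v α(v') e^{B(v')} dv' with B(v) = ∫_0^v β, where α(v) = r²(v)(∂_vφ)²(v)/∂_v r(v), β(v) = r(v)(∂_vφ)²(v)/∂_v r(v), ∂_v r = 1/2, r(v) = v/2, and r|∂_vφ|(v) ≤ η·𝟙_{S}(v) + M^{1/2}δ^{−1/2}·𝟙_{[v_0, v_0+δ]}(v) where S = ⋃_{i=1}^{N}[v_*+i², v_*+i²+1]. Then ∫_0^∞ β ≤ C(η² v_*^{−1/2} + M v_0^{−1}) for a universal constant C. -/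

import Mathlib

open MeasureTheory

lemma tele (s : ℝ) (hs : 1 ≤ s) : ∀ N : ℕ,
    ∑ i ∈ Finset.Icc 1 N, (1:ℝ)/(s+i)^2 ≤ 1/s - 1/(s+N) := by
  intro N
  induction N with
  | zero => simp
  | succ n ih =>
    rw [Finset.sum_Icc_succ_top (by omega)]
    have h1 : (0:ℝ) < s + n := by positivity
    have h2 : (0:ℝ) < s + (n+1) := by positivity
    have key : (1:ℝ)/(s+(n+1))^2 ≤ 1/(s+n) - 1/(s+(n+1)) := by
      rw [div_sub_div _ _ (ne_of_gt h1) (ne_of_gt h2)]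
      rw [div_le_div_iff₀ (by positivity) (by positivity)]
      nlinarith
    push_cast
    push_cast at ih
    linarith

lemma sumbound (vstar : ℝ) (hv : 1 ≤ vstar) (N : ℕ) :
    ∑ i ∈ Finset.Icc 1 N, (1:ℝ)/(vstar+(i:ℝ)^2) ≤ 2 / Real.sqrt vstar := by
  have hs : 1 ≤ Real.sqrt vstar := by
    rw [show (1:ℝ) = Real.sqrt 1 by simp]
    exact Real.sqrt_le_sqrt hv
  set s := Real.sqrt vstar with hsdef
  have hs2 : s^2 = vstar := Real.sq_sqrt (by linarith)
  calc ∑ i ∈ Finset.Icc 1 N, (1:ℝ)/(vstar+(i:ℝ)^2)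
      ≤ ∑ i ∈ Finset.Icc 1 N, 2/(s+(i:ℝ))^2 := by
        apply Finset.sum_le_sum
        intro i _
        rw [div_le_div_iff₀ (by nlinarith) (by positivity)]
        nlinarith [sq_nonneg (s - (i:ℝ))]
    _ = 2 * ∑ i ∈ Finset.Icc 1 N, (1:ℝ)/(s+(i:ℝ))^2 := by
        rw [Finset.mul_sum]; congr 1; ext i; ring
    _ ≤ 2 * (1/s - 1/(s+N)) := by
        have := tele s hs N
        linarith
    _ ≤ 2 / s := by
        have h1 : (0:ℝ) < s + N := by positivity
        have h2 : 0 ≤ 1/(s+(N:ℝ)) := by positivity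
        rw [div_eq_mul_one_div 2 s]
        linarith

set_option maxHeartbeats 1000000 in
/-- Estimate on the exponential weight for the pulse-train data: with `r(v) = v/2`,
`∂_v r = 1/2`, `β = r(∂_vφ)²/∂_v r = v(∂_vφ)²`, if
`r|∂_vφ| ≤ η·𝟙_S + √(M/δ)·𝟙_{[v₀,v₀+δ]}` where `S = ⋃_{i=1}^N [v_*+i², v_*+i²+1]`,
then `∫_0^∞ β ≤ C(η² v_*^{−1/2} + M/v₀)` for a universal constant `C`. -/
theorem exponential_weight_estimate :
    ∃ C : ℝ, 0 < C ∧
    ∀ (dvφ : ℝ → ℝ) (η M δ vstar v₀ : ℝ) (N : ℕ),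
      Measurable dvφ →
      0 ≤ η → 0 ≤ M → 0 < δ → 1 ≤ vstar → 0 < v₀ →
      (∀ v : ℝ, 0 < v →
        (v / 2) * |dvφ v| ≤
          η * Set.indicator (⋃ i ∈ Finset.Icc 1 N,
                Set.Icc (vstar + (i:ℝ)^2) (vstar + (i:ℝ)^2 + 1)) (fun _ => (1:ℝ)) v
          + Real.sqrt M * (Real.sqrt δ)⁻¹ *
              Set.indicator (Set.Icc v₀ (v₀ + δ)) (fun _ => (1:ℝ)) v) →
      (∫ v in Set.Ioi (0:ℝ), v * (dvφ v) ^ 2) ≤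
        C * (η ^ 2 / Real.sqrt vstar + M / v₀) := by
  refine ⟨16, by norm_num, ?_⟩
  intro dvφ η M δ vstar v₀ N hmeas hη hM hδ hvstar hv₀ hbound
  set S : Set ℝ := ⋃ i ∈ Finset.Icc 1 N,
      Set.Icc (vstar + (i:ℝ)^2) (vstar + (i:ℝ)^2 + 1) with hSdef
  set I : Set ℝ := Set.Icc v₀ (v₀ + δ) with hIdef
  -- dominating function
  set h : ℝ → ℝ := fun v =>
      (∑ i ∈ Finset.Icc 1 N, (8*η^2/(vstar+(i:ℝ)^2)) *
        Set.indicator (Set.Icc (vstar+(i:ℝ)^2) (vstar+(i:ℝ)^2+1)) (fun _ => (1:ℝ)) v)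
      + (8*M/(δ*v₀)) * Set.indicator I (fun _ => (1:ℝ)) v with hhdef
  have hIntInd : ∀ a b : ℝ, Integrable (Set.indicator (Set.Icc a b) (fun _ => (1:ℝ))) := by
    intro a b
    rw [integrable_indicator_iff measurableSet_Icc]
    exact (integrableOn_const_iff).mpr (Or.inr measure_Icc_lt_top)
  have hIntH : Integrable h := by
    apply Integrable.add
    · exact integrable_finset_sum _ (fun i _ => (hIntInd _ _).const_mul _)
    · exact (hIntInd _ _).const_mul _
  -- nonnegativity of h
  have hHnn : ∀ v : ℝ, 0 ≤ h v := by
    intro v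
    apply add_nonneg
    · apply Finset.sum_nonneg
      intro i _
      apply mul_nonneg
      · have : (0:ℝ) < vstar + (i:ℝ)^2 := by positivity
        positivity
      · exact Set.indicator_nonneg (fun _ _ => zero_le_one) v
    · apply mul_nonneg (by positivity)
      exact Set.indicator_nonneg (fun _ _ => zero_le_one) v
  -- pointwise bound on Ioi 0
  have hpt : ∀ v ∈ Set.Ioi (0:ℝ), v * (dvφ v)^2 ≤ h v := by
    intro v hv
    rw [Set.mem_Ioi] at hv
    have hb := hbound v hv
    set A := η * Set.indicator S (fun _ => (1:ℝ)) v with hAdef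
    set B := Real.sqrt M * (Real.sqrt δ)⁻¹ * Set.indicator I (fun _ => (1:ℝ)) v with hBdef
    have hA0 : 0 ≤ A := mul_nonneg hη (Set.indicator_nonneg (fun _ _ => zero_le_one) v)
    have hB0 : 0 ≤ B := by
      apply mul_nonneg (mul_nonneg (Real.sqrt_nonneg _) (by positivity))
      exact Set.indicator_nonneg (fun _ _ => zero_le_one) v
    have habs : v * |dvφ v| ≤ 2*(A+B) := by linarith
    have h2 : (v * |dvφ v|)^2 ≤ (2*(A+B))^2 := by
      apply pow_le_pow_left₀ (mul_nonneg hv.le (abs_nonneg _)) habs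
    have h3 : v^2 * (dvφ v)^2 ≤ 8*A^2 + 8*B^2 := by
      have := sq_abs (dvφ v)
      nlinarith [sq_nonneg (A-B)]
    have hvd : v * (dvφ v)^2 ≤ (8*A^2 + 8*B^2)/v := by
      rw [le_div_iff₀ hv]
      nlinarith
    -- compute A^2 and B^2
    have hA2 : A^2 = η^2 * Set.indicator S (fun _ => (1:ℝ)) v := by
      by_cases hvS : v ∈ S
      · simp [hAdef, Set.indicator_of_mem hvS]
      · simp [hAdef, Set.indicator_of_notMem hvS]
    have hB2 : B^2 = (M/δ) * Set.indicator I (fun _ => (1:ℝ)) v := by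
      by_cases hvI : v ∈ I
      · simp only [hBdef, Set.indicator_of_mem hvI, mul_one]
        rw [mul_pow, Real.sq_sqrt hM, inv_pow, Real.sq_sqrt hδ.le, div_eq_mul_inv]
      · simp [hBdef, Set.indicator_of_notMem hvI]
    -- bound the two pieces by h
    have hpart1 : (8 * A^2)/v ≤ ∑ i ∈ Finset.Icc 1 N, (8*η^2/(vstar+(i:ℝ)^2)) *
        Set.indicator (Set.Icc (vstar+(i:ℝ)^2) (vstar+(i:ℝ)^2+1)) (fun _ => (1:ℝ)) v := by
      rw [hA2]
      by_cases hvS : v ∈ S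
      · obtain ⟨i, hle1, hiN', hle2⟩ : ∃ i : ℕ, vstar + (i:ℝ)^2 ≤ v ∧ (1 ≤ i ∧ i ≤ N)
            ∧ v ≤ vstar + (i:ℝ)^2 + 1 := by
          simpa [hSdef, Set.mem_iUnion] using hvS
        have hiN : i ∈ Finset.Icc 1 N := Finset.mem_Icc.mpr hiN'
        have hvi : v ∈ Set.Icc (vstar+(i:ℝ)^2) (vstar+(i:ℝ)^2+1) := ⟨hle1, hle2⟩
        have hle : (8 * (η^2 * 1))/v ≤ (8*η^2/(vstar+(i:ℝ)^2)) *
            Set.indicator (Set.Icc (vstar+(i:ℝ)^2) (vstar+(i:ℝ)^2+1)) (fun _ => (1:ℝ)) v := by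
          rw [Set.indicator_of_mem hvi, mul_one, mul_one]
          have hpos : (0:ℝ) < vstar + (i:ℝ)^2 := by positivity
          rw [div_le_div_iff₀ hv hpos]
          have hvge : vstar + (i:ℝ)^2 ≤ v := hvi.1
          nlinarith
        calc (8 * (η^2 * Set.indicator S (fun _ => (1:ℝ)) v))/v
            = (8 * (η^2 * 1))/v := by rw [Set.indicator_of_mem hvS]
          _ ≤ _ := hle.trans (Finset.single_le_sum (f := fun j : ℕ => (8*η^2/(vstar+(j:ℝ)^2)) *
              Set.indicator (Set.Icc (vstar+(j:ℝ)^2) (vstar+(j:ℝ)^2+1)) (fun _ => (1:ℝ)) v)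
              (fun j _ => by
                apply mul_nonneg
                · have : (0:ℝ) < vstar + (j:ℝ)^2 := by positivity
                  positivity
                · exact Set.indicator_nonneg (fun _ _ => zero_le_one) v) hiN)
      · rw [Set.indicator_of_notMem hvS]
        simp only [mul_zero, zero_div]
        apply Finset.sum_nonneg
        intro j _
        apply mul_nonneg
        · have : (0:ℝ) < vstar + (j:ℝ)^2 := by positivity
          positivity
        · exact Set.indicator_nonneg (fun _ _ => zero_le_one) v
    have hpart2 : (8 * B^2)/v ≤ (8*M/(δ*v₀)) * Set.indicator I (fun _ => (1:ℝ)) v := by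
      rw [hB2]
      by_cases hvI : v ∈ I
      · rw [Set.indicator_of_mem hvI, mul_one, mul_one]
        have hvge : v₀ ≤ v := hvI.1
        rw [div_le_div_iff₀ hv (by positivity)]
        have hδ' : δ ≠ 0 := ne_of_gt hδ
        have he : 8 * (M/δ) * (δ*v₀) = 8*M*v₀ := by field_simp
        rw [he]
        nlinarith
      · rw [Set.indicator_of_notMem hvI]
        simp
    calc v * (dvφ v)^2 ≤ (8*A^2 + 8*B^2)/v := hvd
      _ = (8*A^2)/v + (8*B^2)/v := by ring
      _ ≤ h v := by rw [hhdef]; exact add_le_add hpart1 hpart2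
  -- integral comparison
  have hmono : (∫ v in Set.Ioi (0:ℝ), v * (dvφ v)^2) ≤ ∫ v in Set.Ioi (0:ℝ), h v := by
    apply integral_mono_of_nonneg
    · filter_upwards [self_mem_ae_restrict measurableSet_Ioi] with v hv
      rw [Set.mem_Ioi] at hv
      positivity
    · exact hIntH.restrict
    · filter_upwards [self_mem_ae_restrict measurableSet_Ioi] with v hv
      exact hpt v hv
  have hsetle : (∫ v in Set.Ioi (0:ℝ), h v) ≤ ∫ v, h v :=
    setIntegral_le_integral hIntH (ae_of_all _ hHnn)
  -- compute ∫ h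
  have hind_int : ∀ a b : ℝ, a ≤ b →
      (∫ v, Set.indicator (Set.Icc a b) (fun _ => (1:ℝ)) v) = b - a := by
    intro a b hab
    rw [integral_indicator_const (1:ℝ) measurableSet_Icc, Real.volume_real_Icc_of_le hab,
      smul_eq_mul, mul_one]
  have hIH : (∫ v, h v) = (∑ i ∈ Finset.Icc 1 N, 8*η^2/(vstar+(i:ℝ)^2)) + 8*M/v₀ := by
    rw [hhdef]
    rw [integral_add (integrable_finset_sum _ (fun i _ => (hIntInd _ _).const_mul _))
      ((hIntInd _ _).const_mul _)]
    rw [integral_finset_sum _ (fun i _ => (hIntInd _ _).const_mul _)]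
    congr 1
    · apply Finset.sum_congr rfl
      intro i _
      rw [integral_const_mul _ _, hind_int _ _ (by linarith)]
      ring_nf
    · rw [integral_const_mul _ _, hind_int _ _ (by linarith)]
      have : v₀ + δ - v₀ = δ := by ring
      rw [this]
      field_simp
  -- final arithmetic
  have hsum : (∑ i ∈ Finset.Icc 1 N, 8*η^2/(vstar+(i:ℝ)^2)) ≤ 16 * η^2 / Real.sqrt vstar := by
    have h1 : (∑ i ∈ Finset.Icc 1 N, 8*η^2/(vstar+(i:ℝ)^2))
        = 8*η^2 * ∑ i ∈ Finset.Icc 1 N, (1:ℝ)/(vstar+(i:ℝ)^2) := by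
      rw [Finset.mul_sum]; apply Finset.sum_congr rfl; intro i _; ring
    rw [h1]
    have h2 := sumbound vstar hvstar N
    have h3 : 0 ≤ 8*η^2 := by positivity
    calc 8*η^2 * ∑ i ∈ Finset.Icc 1 N, (1:ℝ)/(vstar+(i:ℝ)^2)
        ≤ 8*η^2 * (2/Real.sqrt vstar) := mul_le_mul_of_nonneg_left h2 h3
      _ = 16 * η^2 / Real.sqrt vstar := by ring
    -- done
  have hfinal : (∑ i ∈ Finset.Icc 1 N, 8*η^2/(vstar+(i:ℝ)^2)) + 8*M/v₀
      ≤ 16 * (η^2/Real.sqrt vstar + M/v₀) := by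
    have hMv : 8*M/v₀ ≤ 16*(M/v₀) := by
      have h1 : 8*M/v₀ = 8*(M/v₀) := by ring
      have h2 : 0 ≤ M/v₀ := by positivity
      linarith [h1.le, h1.ge]
    have : 16 * η^2 / Real.sqrt vstar = 16 * (η^2/Real.sqrt vstar) := by ring
    linarith [hsum, hMv, this.le]
  linarith [hmono, hsetle, hIH.le, hfinal, hIH.ge]
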